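/- arXiv:1402.1157 — 2 statements merged into one kernel-verified Lean document; each statement's English description precedes it below -/
import Mathlib

section
/- Let V and Λ be finite-dimensional real inner product spaces, a : V × V → ℝ a bounded symmetric bilinear form coercive on the kernel of b, and b : V × Λ → ℝ a bounded bilinear form satisfying the inf-sup condition: ∃ β > 0 such that for all σ ∈ Λ, sup over nonzero v of b(v,σ)/‖v‖ ≥ β‖σ‖. Then for any bounded linear functional ℓ on V, the saddle point problem: find (u, λ) with a(u,v) + b(v,λ) = ℓ(v) for all v and b(u,ρ) = 0 for all ρ, has a unique solution. -/
set_option maxHeartbeats 1000000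


theorem stmt1 {V Λ : Type*}
    [NormedAddCommGroup V] [InnerProductSpace ℝ V] [FiniteDimensional ℝ V]
    [NormedAddCommGroup Λ] [InnerProductSpace ℝ Λ] [FiniteDimensional ℝ Λ]
    (a : V →ₗ[ℝ] V →ₗ[ℝ] ℝ) (b : V →ₗ[ℝ] Λ →ₗ[ℝ] ℝ)
    (hsymm : ∀ u v : V, a u v = a v u)
    (Ma : ℝ) (hbda : ∀ u v : V, |a u v| ≤ Ma * ‖u‖ * ‖v‖)
    (α : ℝ) (hα : 0 < α)
    (hcoer : ∀ v : V, (∀ ρ : Λ, b v ρ = 0) → α * ‖v‖ ^ 2 ≤ a v v)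
    (Mb : ℝ) (hbdb : ∀ (v : V) (ρ : Λ), |b v ρ| ≤ Mb * ‖v‖ * ‖ρ‖)
    (β : ℝ) (hβ : 0 < β)
    (hinfsup : ∀ σ : Λ, β * ‖σ‖ ≤ ⨆ v : {v : V // v ≠ 0}, b v σ / ‖(v : V)‖)
    (ℓ : V →ₗ[ℝ] ℝ) :
    ∃! p : V × Λ, (∀ v : V, a p.1 v + b v p.2 = ℓ v) ∧ (∀ ρ : Λ, b p.1 ρ = 0) := by
  classical
  -- The linear map encoding the saddle point system
  let T : V × Λ →ₗ[ℝ] ((V →ₗ[ℝ] ℝ) × (Λ →ₗ[ℝ] ℝ)) :=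
    { toFun := fun p => (a p.1 + b.flip p.2, b p.1)
      map_add' := by
        intro p q
        ext <;> simp <;> ring
      map_smul' := by
        intro c p
        ext <;> simp }
  have hTinj : Function.Injective T := by
    rw [← LinearMap.ker_eq_bot, LinearMap.ker_eq_bot']
    intro p hp
    have h1 : a p.1 + b.flip p.2 = 0 := congrArg Prod.fst hp
    have h2 : b p.1 = 0 := congrArg Prod.snd hp
    have h2' : ∀ ρ : Λ, b p.1 ρ = 0 := fun ρ => by rw [h2]; rfl
    have h1' : ∀ v : V, a p.1 v + b v p.2 = 0 := by
      intro v
      have := LinearMap.congr_fun h1 v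
      simpa using this
    have hu : p.1 = 0 := by
      have h3 := h1' p.1
      have h4 := h2' p.2
      have h5 := hcoer p.1 h2'
      have h6 : ‖p.1‖ ^ 2 ≤ 0 := by nlinarith [sq_nonneg ‖p.1‖]
      have h7 : ‖p.1‖ ^ 2 = 0 := le_antisymm h6 (sq_nonneg _)
      exact norm_eq_zero.mp (pow_eq_zero_iff two_ne_zero |>.mp h7)
    have hlam : p.2 = 0 := by
      have hb0 : ∀ v : V, b v p.2 = 0 := by
        intro v
        have := h1' v
        rw [hu] at this
        simpa using this
      by_contra hne
      have hsup : (⨆ v : {v : V // v ≠ 0}, b v p.2 / ‖(v : V)‖) ≤ 0 := by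
        apply Real.iSup_le _ le_rfl
        intro v
        rw [hb0 v]
        simp
      have := hinfsup p.2
      have hβσ : 0 < β * ‖p.2‖ := mul_pos hβ (norm_pos_iff.mpr hne)
      linarith
    exact Prod.ext hu hlam
  have hdim : Module.finrank ℝ (V × Λ) =
      Module.finrank ℝ ((V →ₗ[ℝ] ℝ) × (Λ →ₗ[ℝ] ℝ)) := by
    simp [Module.finrank_prod, Module.finrank_linearMap]
  have hTsurj : Function.Surjective T :=
    (LinearMap.injective_iff_surjective_of_finrank_eq_finrank hdim).mp hTinj
  obtain ⟨p, hp⟩ := hTsurj (ℓ, 0)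
  have hp1 : a p.1 + b.flip p.2 = ℓ := congrArg Prod.fst hp
  have hp2 : b p.1 = 0 := congrArg Prod.snd hp
  refine ⟨p, ⟨?_, fun ρ => by rw [hp2]; rfl⟩, ?_⟩
  · intro v
    have := LinearMap.congr_fun hp1 v
    simpa using this
  · rintro q ⟨hq1, hq2⟩
    apply hTinj
    rw [hp]
    refine Prod.ext ?_ ?_
    · show a q.1 + b.flip q.2 = ℓ
      ext v
      simpa using hq1 v
    · show b q.1 = (0 : Λ →ₗ[ℝ] ℝ)
      ext ρ
      simpa using hq2 ρ
end

section
/- Under the same Brezzi conditions, the solution (u, λ) of the saddle point problem satisfies the stability estimate ‖u‖ + ‖λ‖ ≤ C‖ℓ‖, where C depends only on the boundedness constants, the coercivity constant on the kernel, and the inf-sup constant, and ‖ℓ‖ is the operator norm of the functional ℓ. -/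
theorem stmt2 (Ma α Mb β : ℝ) (hα : 0 < α) (hβ : 0 < β) :
    ∃ C : ℝ, 0 < C ∧
      ∀ (V Λ : Type)
        (_ : NormedAddCommGroup V), ∀ (_ : InnerProductSpace ℝ V)
        (_ : FiniteDimensional ℝ V)
        (_ : NormedAddCommGroup Λ), ∀ (_ : InnerProductSpace ℝ Λ)
        (_ : FiniteDimensional ℝ Λ)
        (a : V →ₗ[ℝ] V →ₗ[ℝ] ℝ) (b : V →ₗ[ℝ] Λ →ₗ[ℝ] ℝ)
        (_ : ∀ u v : V, a u v = a v u)
        (_ : ∀ u v : V, |a u v| ≤ Ma * ‖u‖ * ‖v‖)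
        (_ : ∀ v : V, (∀ ρ : Λ, b v ρ = 0) → α * ‖v‖ ^ 2 ≤ a v v)
        (_ : ∀ (v : V) (ρ : Λ), |b v ρ| ≤ Mb * ‖v‖ * ‖ρ‖)
        (_ : ∀ σ : Λ, β * ‖σ‖ ≤ ⨆ v : {v : V // v ≠ 0}, b v σ / ‖(v : V)‖)
        (ℓ : V →L[ℝ] ℝ) (u : V) (lam : Λ)
        (_ : ∀ v : V, a u v + b v lam = ℓ v)
        (_ : ∀ ρ : Λ, b u ρ = 0),
        ‖u‖ + ‖lam‖ ≤ C * ‖ℓ‖ := by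
  refine ⟨1 / α + (1 + |Ma| / α) / β, by positivity, ?_⟩
  intro V Λ _ _ _ _ _ _ a b _hsym hMa hcoer _hMb hinfsup ℓ u lam he hb
  -- bound on u
  have hu0 : α * ‖u‖ ^ 2 ≤ a u u := hcoer u hb
  have hau : a u u = ℓ u := by
    have := he u
    rw [hb lam] at this
    linarith
  have hlu : ℓ u ≤ ‖ℓ‖ * ‖u‖ := (le_abs_self _).trans (ℓ.le_opNorm u)
  have hu : ‖u‖ ≤ ‖ℓ‖ / α := by
    rcases eq_or_lt_of_le (norm_nonneg u) with h | h
    · rw [← h]; positivity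
    · rw [le_div_iff₀ hα]
      nlinarith
  -- bound on lam
  have hsup : β * ‖lam‖ ≤ ‖ℓ‖ + |Ma| * ‖u‖ := by
    refine (hinfsup lam).trans (Real.iSup_le ?_ (by positivity))
    rintro ⟨v, hv⟩
    have hvp : (0:ℝ) < ‖v‖ := norm_pos_iff.mpr hv
    rw [div_le_iff₀ hvp]
    have hbv : b v lam = ℓ v - a u v := by have := he v; linarith
    have h1 : ℓ v ≤ ‖ℓ‖ * ‖v‖ := (le_abs_self _).trans (ℓ.le_opNorm v)
    have h2 : -(a u v) ≤ |Ma| * ‖u‖ * ‖v‖ := by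
      have := (hMa u v)
      have h3 : Ma * ‖u‖ * ‖v‖ ≤ |Ma| * ‖u‖ * ‖v‖ := by
        nlinarith [mul_nonneg (mul_nonneg (sub_nonneg.mpr (le_abs_self Ma)) (norm_nonneg u)) (norm_nonneg v)]
      nlinarith [abs_nonneg (a u v), neg_abs_le (a u v)]
    nlinarith
  have hlam : ‖lam‖ ≤ (‖ℓ‖ + |Ma| * ‖u‖) / β := by
    rw [le_div_iff₀ hβ]; linarith
  have hM : (0:ℝ) ≤ |Ma| := abs_nonneg Ma
  have hl : (0:ℝ) ≤ ‖ℓ‖ := norm_nonneg ℓ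
  calc ‖u‖ + ‖lam‖ ≤ ‖ℓ‖ / α + (‖ℓ‖ + |Ma| * (‖ℓ‖ / α)) / β := by
        gcongr
        exact hlam.trans (by gcongr)
    _ = (1 / α + (1 + |Ma| / α) / β) * ‖ℓ‖ := by field_simp
end
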